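/- Assume char K = 2. Let κ be a plane external to the Klein quadric H₅ and let v be a point with v ≤ κ. Then the pencil L[v,κ] contains at least one line N with N ≤ π₅(N), i.e. there is a 2-dimensional subspace N with v ≤ N ≤ κ on which the polar form B vanishes identically (B(x,y) = 0 for all x,y ∈ N). In particular, in characteristic two every pencil of an hfd line set contains a line N with N ≤ π₅(N). -/
import Mathlib


/-- The Klein quadratic form on `K^6`. -/
def kleinQ {K : Type*} [Field K] (x : Fin 6 → K) : K :=
  x 0 * x 1 + x 2 * x 3 + x 4 * x 5

/-- The polar bilinear form `B(x,y) = Q(x+y) - Q(x) - Q(y)`. -/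
def kleinB {K : Type*} [Field K] (x y : Fin 6 → K) : K :=
  kleinQ (x + y) - kleinQ x - kleinQ y

/-- The polar subspace `π₅(S)` of a subspace `S`. -/
def kleinPolar {K : Type*} [Field K] (S : Submodule K (Fin 6 → K)) :
    Submodule K (Fin 6 → K) where
  carrier := {y | ∀ s ∈ S, kleinB s y = 0}
  add_mem' := by
    intro a b ha hb s hs
    have h1 := ha s hs
    have h2 := hb s hs
    simp only [kleinB, kleinQ, Pi.add_apply] at *
    linear_combination h1 + h2
  zero_mem' := by
    intro s hs
    simp [kleinB, kleinQ]
  smul_mem' := by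
    intro c a ha s hs
    have h1 := ha s hs
    simp only [kleinB, kleinQ, Pi.add_apply, Pi.smul_apply, smul_eq_mul] at *
    linear_combination c * h1

/-- `τ` is a tangent hyperplane of the Klein quadric. -/
def IsTangentHyperplane {K : Type*} [Field K] (τ : Submodule K (Fin 6 → K)) : Prop :=
  ∃ x : Fin 6 → K, x ≠ 0 ∧ kleinQ x = 0 ∧ τ = kleinPolar (Submodule.span K {x})

/-- A subspace is external to the Klein quadric. -/
def IsExternal {K : Type*} [Field K] (S : Submodule K (Fin 6 → K)) : Prop :=
  ∀ s ∈ S, s ≠ 0 → kleinQ s ≠ 0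

/-- A `0`-secant of the Klein quadric: an external line. -/
def IsSecant {K : Type*} [Field K] (G : Submodule K (Fin 6 → K)) : Prop :=
  Module.finrank K G = 2 ∧ IsExternal G

/-- The pencil of lines with vertex `v` and carrier plane `κ`. -/
def pencil {K : Type*} [Field K] (v κ : Submodule K (Fin 6 → K)) :
    Set (Submodule K (Fin 6 → K)) :=
  {X | Module.finrank K X = 2 ∧ v ≤ X ∧ X ≤ κ}

/-- An hfd line set: a set of `0`-secants such that every tangent hyperplane
contains exactly one member. -/
def IsHfd {K : Type*} [Field K] (H : Set (Submodule K (Fin 6 → K))) : Prop :=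
  (∀ G ∈ H, IsSecant G) ∧
    ∀ τ : Submodule K (Fin 6 → K), IsTangentHyperplane τ → ∃! G, G ∈ H ∧ G ≤ τ

/-- A pencilled hfd line set: every member lies in a pencil entirely contained in `H`. -/
def IsPencilledHfd {K : Type*} [Field K] (H : Set (Submodule K (Fin 6 → K))) : Prop :=
  IsHfd H ∧
    ∀ G ∈ H, ∃ v κ : Submodule K (Fin 6 → K), Module.finrank K v = 1 ∧
      Module.finrank K κ = 3 ∧ v ≤ κ ∧ pencil v κ ⊆ H ∧ G ∈ pencil v κ

/-- `v` is a vertex of the pencilled hfd line set `H`. -/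
def IsVertex {K : Type*} [Field K] (H : Set (Submodule K (Fin 6 → K)))
    (v : Submodule K (Fin 6 → K)) : Prop :=
  Module.finrank K v = 1 ∧ ∃ κ : Submodule K (Fin 6 → K),
    Module.finrank K κ = 3 ∧ v ≤ κ ∧ pencil v κ ⊆ H

/-- `κ` is a carrier plane of the pencilled hfd line set `H`. -/
def IsCarrier {K : Type*} [Field K] (H : Set (Submodule K (Fin 6 → K)))
    (κ : Submodule K (Fin 6 → K)) : Prop :=
  Module.finrank K κ = 3 ∧ ∃ v : Submodule K (Fin 6 → K),
    Module.finrank K v = 1 ∧ v ≤ κ ∧ pencil v κ ⊆ H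

/-- Explicit formula for the polar form. -/
lemma kleinB_eq {K : Type*} [Field K] (x y : Fin 6 → K) :
    kleinB x y = x 0 * y 1 + x 1 * y 0 + x 2 * y 3 + x 3 * y 2 + x 4 * y 5 + x 5 * y 4 := by
  simp only [kleinB, kleinQ, Pi.add_apply]
  ring

lemma kleinB_self {K : Type*} [Field K] [CharP K 2] (x : Fin 6 → K) :
    kleinB x x = 0 := by
  have h2 : (2 : K) = 0 := by
    have := CharP.cast_eq_zero K 2
    simpa using this
  rw [kleinB_eq]
  linear_combination (x 0 * x 1 + x 2 * x 3 + x 4 * x 5) * h2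

lemma kleinB_symm {K : Type*} [Field K] (x y : Fin 6 → K) :
    kleinB x y = kleinB y x := by
  rw [kleinB_eq, kleinB_eq]; ring

/-- `kleinB x ·` as a linear map. -/
def kleinBL {K : Type*} [Field K] (x : Fin 6 → K) : (Fin 6 → K) →ₗ[K] K where
  toFun y := kleinB x y
  map_add' y z := by simp only [kleinB_eq, Pi.add_apply]; ring
  map_smul' c y := by simp only [kleinB_eq, Pi.smul_apply, smul_eq_mul, RingHom.id_apply]; ring

lemma kleinB_comb {K : Type*} [Field K] (a b c d : K) (x y : Fin 6 → K) :
    kleinB (a • x + b • y) (c • x + d • y) =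
      a * c * kleinB x x + a * d * kleinB x y + b * c * kleinB y x + b * d * kleinB y y := by
  simp only [kleinB_eq, Pi.add_apply, Pi.smul_apply, smul_eq_mul]; ring

/-- Key lemma: external hypothesis not needed. -/
lemma pencil_selfpolar {K : Type*} [Field K] [CharP K 2]
    (κ v : Submodule K (Fin 6 → K)) (hκ : Module.finrank K κ = 3)
    (hv : Module.finrank K v = 1) (hvκ : v ≤ κ) :
    ∃ N : Submodule K (Fin 6 → K), Module.finrank K N = 2 ∧
      v ≤ N ∧ N ≤ κ ∧ N ≤ kleinPolar N := by
  -- get a generator of v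
  have hvne : v ≠ ⊥ := by
    intro h; rw [h] at hv; simp at hv
  obtain ⟨v₀, hv₀v, hv₀ne⟩ := Submodule.exists_mem_ne_zero_of_ne_bot hvne
  have hvspan : Submodule.span K {v₀} = v := by
    apply Submodule.eq_of_le_of_finrank_le
    · rwa [Submodule.span_singleton_le_iff_mem]
    · rw [hv, finrank_span_singleton hv₀ne]
  -- the linear form w ↦ B(v₀, w)
  set L := kleinBL (K := K) v₀ with hL
  have hkerL : 5 ≤ Module.finrank K (LinearMap.ker L) := by
    have h1 := LinearMap.finrank_range_add_finrank_ker L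
    have h2 : Module.finrank K (LinearMap.range L) ≤ 1 := by
      have := Submodule.finrank_le (LinearMap.range L)
      simpa using this
    have h3 : Module.finrank K (Fin 6 → K) = 6 := by simp
    omega
  -- S = κ ⊓ ker L has finrank ≥ 2
  set S := κ ⊓ LinearMap.ker L with hS
  have hSrank : 2 ≤ Module.finrank K S := by
    have h1 := Submodule.finrank_sup_add_finrank_inf_eq κ (LinearMap.ker L)
    have h2 : Module.finrank K ↥(κ ⊔ LinearMap.ker L) ≤ 6 := by
      have := Submodule.finrank_le (κ ⊔ LinearMap.ker L)
      simpa using this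
    rw [← hS] at h1
    omega
  have hv₀S : v₀ ∈ S := by
    refine ⟨hvκ hv₀v, ?_⟩
    show L v₀ = 0
    exact kleinB_self v₀
  -- find w ∈ S \ v
  have : ¬ (S ≤ v) := by
    intro h
    have := Submodule.finrank_mono h
    omega
  obtain ⟨w, hwS, hwv⟩ := Set.not_subset.mp this
  have hwκ : w ∈ κ := hwS.1
  have hwker : kleinB v₀ w = 0 := hwS.2
  have hwne : w ≠ 0 := by rintro rfl; exact hwv (Submodule.zero_mem v)
  set N := v ⊔ Submodule.span K {w} with hN
  have hvN : v ≤ N := le_sup_left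
  have hwN : w ∈ N := Submodule.mem_sup_right (Submodule.mem_span_singleton_self w)
  have hNκ : N ≤ κ := sup_le hvκ (by rwa [Submodule.span_singleton_le_iff_mem])
  have hNrank : Module.finrank K N = 2 := by
    have hle : Module.finrank K N ≤ 2 := by
      have h1 := Submodule.finrank_add_le_finrank_add_finrank v (Submodule.span K {w})
      rw [hv, finrank_span_singleton hwne] at h1
      exact h1
    have hlt : v < N := lt_of_le_of_ne hvN (by intro h; rw [← h] at hwN; exact hwv hwN)
    have := Submodule.finrank_lt_finrank_of_lt hlt
    omega
  refine ⟨N, hNrank, hvN, hNκ, ?_⟩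
  -- N = span {v₀, w}
  have hNspan : N = Submodule.span K {v₀, w} := by
    rw [hN, ← hvspan, Submodule.span_insert]
  intro y hy s hs
  rw [hNspan] at hy hs
  obtain ⟨a, b, rfl⟩ := Submodule.mem_span_pair.mp hs
  obtain ⟨c, d, rfl⟩ := Submodule.mem_span_pair.mp hy
  rw [kleinB_comb]
  rw [kleinB_self, kleinB_self, hwker, kleinB_symm w v₀, hwker]
  ring

/-- In characteristic two, every pencil `L[v,κ]` with external carrier plane `κ`
contains a line `N` with `N ≤ π₅(N)`; in particular, every pencil of an hfd line
set contains such a line. -/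
theorem char_two_pencil_has_selfpolar_line {K : Type*} [Field K] [CharP K 2] :
    (∀ κ v : Submodule K (Fin 6 → K), Module.finrank K κ = 3 → IsExternal κ →
      Module.finrank K v = 1 → v ≤ κ →
      ∃ N : Submodule K (Fin 6 → K), Module.finrank K N = 2 ∧
        v ≤ N ∧ N ≤ κ ∧ N ≤ kleinPolar N) ∧
    (∀ H : Set (Submodule K (Fin 6 → K)), IsHfd H →
      ∀ v κ : Submodule K (Fin 6 → K), Module.finrank K v = 1 →
        Module.finrank K κ = 3 → v ≤ κ → pencil v κ ⊆ H →
        ∃ N ∈ pencil v κ, N ≤ kleinPolar N) := by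
  constructor
  · intro κ v hκ _ hv hvκ
    exact pencil_selfpolar κ v hκ hv hvκ
  · intro H _ v κ hv hκ hvκ _
    obtain ⟨N, h2, hvN, hNκ, hpol⟩ := pencil_selfpolar κ v hκ hv hvκ
    exact ⟨N, ⟨h2, hvN, hNκ⟩, hpol⟩
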